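/- Let I be a nonzero ideal of S. For each n ≥ 1, let G_n be the reduced Gröbner base for the ideal I ∩ S⟨n⟩ inside the polynomial ring S⟨n⟩. Then the set Ḡ = ⋃_{m=1}^{∞} ( ⋂_{n=m}^{∞} G_n ) is the reduced Gröbner base for I. -/

import Mathlib

open MvPolynomial

noncomputable section

/-- `r` is a monomial order on the monomials (finitely supported exponent vectors):
a well-order compatible with multiplication.  Here `r a b` means `x^a < x^b`. -/
def IsMonomialOrder {σ : Type*} (r : (σ →₀ ℕ) → (σ →₀ ℕ) → Prop) : Prop :=
  IsWellOrder (σ →₀ ℕ) r ∧ ∀ a b c : σ →₀ ℕ, r a b → r (c + a) (c + b)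

/-- `m` is the leading monomial of the polynomial `f` with respect to the order `r`. -/
def IsLM {σ k : Type*} [CommSemiring k] (r : (σ →₀ ℕ) → (σ →₀ ℕ) → Prop)
    (f : MvPolynomial σ k) (m : σ →₀ ℕ) : Prop :=
  m ∈ f.support ∧ ∀ m' ∈ f.support, m' ≠ m → r m' m

/-- `t` is the leading term of `f` with respect to `r`. -/
def IsLT {σ k : Type*} [CommSemiring k] (r : (σ →₀ ℕ) → (σ →₀ ℕ) → Prop)
    (f t : MvPolynomial σ k) : Prop :=
  ∃ m, IsLM r f m ∧ t = monomial m (f.coeff m)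

/-- The initial ideal of `I`: the ideal generated by the leading terms of nonzero elements. -/
def initialIdeal {σ k : Type*} [CommSemiring k] (r : (σ →₀ ℕ) → (σ →₀ ℕ) → Prop)
    (I : Ideal (MvPolynomial σ k)) : Ideal (MvPolynomial σ k) :=
  Ideal.span {t | ∃ f ∈ I, f ≠ 0 ∧ IsLT r f t}

/-- The set of leading monomials (as polynomials) of the nonzero members of `G`: `in(G)`. -/
def lmMonomials {σ k : Type*} [CommSemiring k] (r : (σ →₀ ℕ) → (σ →₀ ℕ) → Prop)
    (G : Set (MvPolynomial σ k)) : Set (MvPolynomial σ k) :=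
  {t | ∃ m, (∃ g ∈ G, g ≠ 0 ∧ IsLM r g m) ∧ t = monomial m 1}

/-- `G ⊆ I` is a Gröbner base for `I`: the leading monomials of members of `G`
generate the initial ideal of `I`. -/
def IsGroebnerBasis {σ k : Type*} [CommSemiring k] (r : (σ →₀ ℕ) → (σ →₀ ℕ) → Prop)
    (G : Set (MvPolynomial σ k)) (I : Ideal (MvPolynomial σ k)) : Prop :=
  G ⊆ ↑I ∧ Ideal.span (lmMonomials r G) = initialIdeal r I

/-- `S⟨n⟩ = k[x₀, …, xₙ₋₁]`, the subalgebra of polynomials in the first `n` variables. -/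
def Sn (k : Type*) [CommSemiring k] (n : ℕ) : Subalgebra k (MvPolynomial ℕ k) :=
  MvPolynomial.supported k {i | i < n}

/-- The initial ideal of an ideal `J` of `S⟨n⟩`, computed inside `S⟨n⟩`
(with the restricted monomial order). -/
def initialIdealIn {k : Type*} [CommSemiring k] (r : (ℕ →₀ ℕ) → (ℕ →₀ ℕ) → Prop)
    (n : ℕ) (J : Ideal ↥(Sn k n)) : Ideal ↥(Sn k n) :=
  Ideal.span {t | ∃ f ∈ J, f ≠ 0 ∧ IsLT r (f : MvPolynomial ℕ k) (t : MvPolynomial ℕ k)}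

/-- The ideal `I ∩ S⟨n⟩` of `S⟨n⟩`. -/
def interIdeal {k : Type*} [CommSemiring k] (I : Ideal (MvPolynomial ℕ k)) (n : ℕ) :
    Ideal ↥(Sn k n) :=
  Ideal.comap (Sn k n).subtype I

/-- A subset `G` of `S` lying in `S⟨n⟩` is a Gröbner base for the ideal `J` of `S⟨n⟩`. -/
def IsGroebnerBasisIn {k : Type*} [CommSemiring k] (r : (ℕ →₀ ℕ) → (ℕ →₀ ℕ) → Prop)
    (n : ℕ) (G : Set (MvPolynomial ℕ k)) (J : Ideal ↥(Sn k n)) : Prop :=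
  (∀ g ∈ G, ∃ hg : g ∈ Sn k n, (⟨g, hg⟩ : ↥(Sn k n)) ∈ J) ∧
  Ideal.span {t : ↥(Sn k n) | ∃ m, (∃ g ∈ G, g ≠ 0 ∧ IsLM r g m) ∧
      (t : MvPolynomial ℕ k) = monomial m 1} = initialIdealIn r n J

/-- `f'` is a remainder of `f` on division by `G` with respect to the order `r`. -/
def IsRemainder {σ k : Type*} [CommSemiring k] (r : (σ →₀ ℕ) → (σ →₀ ℕ) → Prop)
    (G : Set (MvPolynomial σ k)) (f f' : MvPolynomial σ k) : Prop :=
  (∃ (s : ℕ) (g q : Fin s → MvPolynomial σ k),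
    (∀ i, g i ∈ G) ∧
    f = (∑ i, q i * g i) + f' ∧
    ∀ i, q i * g i ≠ 0 → ∀ m m', IsLM r (q i * g i) m → IsLM r f m' → m = m' ∨ r m m') ∧
  ∀ m ∈ f'.support, (monomial m 1 : MvPolynomial σ k) ∉ Ideal.span (lmMonomials r G)

/-- `G` is a reduced Gröbner base for `I`: every member is monic and no leading monomial
of a member divides any term of another member. -/
def IsReducedGB {σ k : Type*} [CommSemiring k] (r : (σ →₀ ℕ) → (σ →₀ ℕ) → Prop)
    (G : Set (MvPolynomial σ k)) (I : Ideal (MvPolynomial σ k)) : Prop :=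
  IsGroebnerBasis r G I ∧
  (∀ g ∈ G, ∃ m, IsLM r g m ∧ MvPolynomial.coeff m g = 1) ∧
  (∀ g ∈ G, ∀ h ∈ G, g ≠ h → ∀ m, IsLM r g m → ∀ m' ∈ h.support, ¬ m ≤ m')

/-- A regular sequence indexed by an ordered set `(Ω, lt)`. -/
def IsRegularSeq {R : Type*} [CommRing R] {Ω : Type*} (lt : Ω → Ω → Prop) (f : Ω → R) : Prop :=
  Ideal.span (Set.range f) ≠ ⊤ ∧
  ∀ α : Ω, ∀ h : R, h * f α ∈ Ideal.span (f '' {β | lt β α}) →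
    h ∈ Ideal.span (f '' {β | lt β α})

/-- The FR-condition: every finite strictly increasing subfamily is a regular sequence
in this order. -/
def SatisfiesFR {R : Type*} [CommRing R] {Ω : Type*} (lt : Ω → Ω → Prop) (f : Ω → R) : Prop :=
  ∀ (n : ℕ) (α : Fin n → Ω), (∀ i j : Fin n, i < j → lt (α i) (α j)) →
    IsRegularSeq (· < ·) (fun i => f (α i))

/-- `G` is a reduced Gröbner base for the ideal `J` of `S⟨n⟩`. -/
def IsReducedGBIn {k : Type*} [Field k] (r : (ℕ →₀ ℕ) → (ℕ →₀ ℕ) → Prop)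
    (n : ℕ) (G : Set (MvPolynomial ℕ k)) (J : Ideal ↥(Sn k n)) : Prop :=
  IsGroebnerBasisIn r n G J ∧
  (∀ g ∈ G, ∃ m, IsLM r g m ∧ MvPolynomial.coeff m g = 1) ∧
  (∀ g ∈ G, ∀ h ∈ G, g ≠ h → ∀ m, IsLM r g m → ∀ m' ∈ h.support, ¬ m ≤ m')


section AuxLemmas
variable {k : Type*} [Field k] {r : (ℕ →₀ ℕ) → (ℕ →₀ ℕ) → Prop}

lemma mo_trans (hr : IsMonomialOrder r) {a b c} (h1 : r a b) (h2 : r b c) : r a c := by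
  haveI := hr.1; exact _root_.trans h1 h2

lemma mo_asymm (hr : IsMonomialOrder r) {a b} (h1 : r a b) (h2 : r b a) : False := by
  haveI := hr.1
  exact (IsWellFounded.wf (r := r)).asymmetric _ _ h1 h2

lemma mo_tricho (hr : IsMonomialOrder r) (a b) : r a b ∨ a = b ∨ r b a := by
  haveI := hr.1; exact trichotomous a b

lemma mo_zero_lt (hr : IsMonomialOrder r) {c : ℕ →₀ ℕ} (hc : c ≠ 0) : r 0 c := by
  haveI := hr.1
  rcases mo_tricho hr 0 c with h | h | h
  · exact h
  · exact absurd h.symm hc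
  · exfalso
    have wf : WellFounded r := IsWellFounded.wf
    obtain ⟨x, hx, hmin⟩ := wf.has_min (Set.range fun n : ℕ => n • c) ⟨0, 0, zero_nsmul c⟩
    obtain ⟨n, rfl⟩ := hx
    have : r ((n+1) • c) (n • c) := by
      have := hr.2 c 0 (n • c) h
      rw [add_zero] at this
      have e : (n+1) • c = n • c + c := by rw [succ_nsmul]
      rw [e]; exact this
    exact hmin _ ⟨n+1, rfl⟩ this

lemma mo_lt_of_le (hr : IsMonomialOrder r) {a b : ℕ →₀ ℕ} (h : a ≤ b) (hne : a ≠ b) : r a b := by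
  have hc : a + (b - a) = b := add_tsub_cancel_of_le h
  have hc0 : b - a ≠ 0 := by
    intro h0; apply hne; rw [← hc, h0, add_zero]
  have := hr.2 0 (b - a) a (mo_zero_lt hr hc0)
  rwa [add_zero, hc] at this

lemma exists_rmax (hr : IsMonomialOrder r) (s : Finset (ℕ →₀ ℕ)) (hs : s.Nonempty) :
    ∃ m ∈ s, ∀ a ∈ s, a ≠ m → r a m := by
  classical
  induction s using Finset.induction_on with
  | empty => exact absurd hs (by simp)
  | @insert a s ha ih =>
    rcases s.eq_empty_or_nonempty with rfl | hsne
    · exact ⟨a, by simp, by simp⟩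
    · obtain ⟨m, hm, hmax⟩ := ih hsne
      rcases mo_tricho hr a m with h | rfl | h
      · refine ⟨m, Finset.mem_insert_of_mem hm, ?_⟩
        intro b hb hbne
        rcases Finset.mem_insert.1 hb with rfl | hb
        · exact h
        · exact hmax b hb hbne
      · refine ⟨a, Finset.mem_insert_self _ _, ?_⟩
        intro b hb hbne
        rcases Finset.mem_insert.1 hb with rfl | hb
        · exact absurd rfl hbne
        · exact hmax b hb hbne
      · refine ⟨a, Finset.mem_insert_self _ _, ?_⟩
        intro b hb hbne
        rcases Finset.mem_insert.1 hb with rfl | hb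
        · exact absurd rfl hbne
        · rcases mo_tricho hr b m with h2 | rfl | h2
          · exact mo_trans hr h2 h
          · exact h
          · exact absurd (hmax b hb (by rintro rfl; exact mo_asymm hr h2 h2)) (fun hh => mo_asymm hr h2 hh)


lemma exists_isLM (hr : IsMonomialOrder r) {f : MvPolynomial ℕ k} (hf : f ≠ 0) :
    ∃ m, IsLM r f m := by
  obtain ⟨m, hm, hmax⟩ := exists_rmax hr f.support (by simpa [MvPolynomial.support_eq_empty] using hf)
  exact ⟨m, hm, hmax⟩

lemma isLM_unique (hr : IsMonomialOrder r) {f : MvPolynomial ℕ k} {m m'}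
    (h1 : IsLM r f m) (h2 : IsLM r f m') : m = m' := by
  by_contra hne
  exact mo_asymm hr (h1.2 m' h2.1 (Ne.symm hne)) (h2.2 m h1.1 hne)

/-- The "monomial ideal" of monomials divisible by a member of `M`, as an ideal. -/
def monIdeal (M : Set (ℕ →₀ ℕ)) : Ideal (MvPolynomial ℕ k) where
  carrier := {p | ∀ s ∈ p.support, ∃ m ∈ M, m ≤ s}
  add_mem' := by
    intro a b ha hb s hs
    classical
    rcases Finset.mem_union.1 (MvPolynomial.support_add hs) with h | h
    · exact ha s h
    · exact hb s h
  zero_mem' := by intro s hs; simp at hs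
  smul_mem' := by
    intro c p hp s hs
    classical
    rw [smul_eq_mul] at hs
    obtain ⟨u, hu, v, hv, rfl⟩ := Finset.mem_add.1 (MvPolynomial.support_mul c p hs)
    obtain ⟨m, hm, hle⟩ := hp v hv
    exact ⟨m, hm, hle.trans (le_add_self)⟩

lemma mem_span_monomials {M : Set (ℕ →₀ ℕ)} {p : MvPolynomial ℕ k}
    (hp : p ∈ Ideal.span {t | ∃ m, m ∈ M ∧ t = (monomial m 1 : MvPolynomial ℕ k)}) :
    ∀ s ∈ p.support, ∃ m ∈ M, m ≤ s := by
  have h : Ideal.span {t | ∃ m, m ∈ M ∧ t = (monomial m 1 : MvPolynomial ℕ k)} ≤ monIdeal M := by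
    rw [Ideal.span_le]
    rintro t ⟨m, hm, rfl⟩
    intro s hs
    classical
    rw [MvPolynomial.support_monomial, if_neg (one_ne_zero (α := k)), Finset.mem_singleton] at hs
    exact ⟨m, hm, hs ▸ le_refl m⟩
  exact h hp


/-- Monomials occurring in `f ∈ Sn k n` are supported on `{i | i < n}`. -/
lemma mem_Sn_support {n : ℕ} {f : MvPolynomial ℕ k} (hf : f ∈ Sn k n)
    {m : ℕ →₀ ℕ} (hm : m ∈ f.support) : (monomial m (1:k)) ∈ Sn k n := by
  rw [Sn, MvPolynomial.mem_supported] at hf ⊢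
  intro i hi
  classical
  apply hf
  rw [Finset.mem_coe] at hi ⊢
  have : i ∈ m.support := by
    have hv := MvPolynomial.vars_monomial (s := m) (r := (1:k)) one_ne_zero
    rwa [hv] at hi
  exact (MvPolynomial.mem_vars i).2 ⟨m, hm, this⟩

lemma monomial_mem_Sn {n : ℕ} {m : ℕ →₀ ℕ} (h : (monomial m (1:k)) ∈ Sn k n) (c : k) :
    (monomial m c) ∈ Sn k n := by
  have : (monomial m c : MvPolynomial ℕ k) = C c * monomial m 1 := by
    rw [MvPolynomial.C_mul_monomial, mul_one]
  rw [this]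
  exact mul_mem (by simpa using (Sn k n).algebraMap_mem c) h

lemma exists_Sn_bound (f : MvPolynomial ℕ k) : ∃ N, 1 ≤ N ∧ ∀ n, N ≤ n → f ∈ Sn k n := by
  classical
  obtain ⟨B, hB⟩ : ∃ B, ∀ i ∈ f.vars, i < B := ⟨(f.vars.sup id) + 1, fun i hi =>
    Nat.lt_succ_of_le (Finset.le_sup (f := id) hi)⟩
  refine ⟨max B 1, le_max_right _ _, fun n hn => ?_⟩
  rw [Sn, MvPolynomial.mem_supported]
  intro i hi
  exact lt_of_lt_of_le (hB i hi) (le_trans (le_max_left _ _) hn)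

lemma Sn_mono {a b : ℕ} (h : a ≤ b) : Sn k a ≤ Sn k b :=
  MvPolynomial.supported_mono (fun i (hi : i < a) => lt_of_lt_of_le hi h)

/-- The set of leading monomials of nonzero elements of `I ∩ Sn k n`. -/
def MSet (r : (ℕ →₀ ℕ) → (ℕ →₀ ℕ) → Prop) (I : Ideal (MvPolynomial ℕ k)) (n : ℕ) :
    Set (ℕ →₀ ℕ) :=
  {m | ∃ f, f ∈ I ∧ f ∈ Sn k n ∧ f ≠ 0 ∧ IsLM r f m}

/-- The set of leading monomials of nonzero elements of `I`. -/
def MAll (r : (ℕ →₀ ℕ) → (ℕ →₀ ℕ) → Prop) (I : Ideal (MvPolynomial ℕ k)) : Set (ℕ →₀ ℕ) :=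
  {m | ∃ f, f ∈ I ∧ f ≠ 0 ∧ IsLM r f m}

lemma MSet_subset_MAll {I : Ideal (MvPolynomial ℕ k)} {n : ℕ} : MSet r I n ⊆ MAll r I := by
  rintro m ⟨f, h1, h2, h3, h4⟩; exact ⟨f, h1, h3, h4⟩

lemma MAll_eq_union {I : Ideal (MvPolynomial ℕ k)} {m : ℕ →₀ ℕ} (hm : m ∈ MAll r I) :
    ∃ N, 1 ≤ N ∧ ∀ n, N ≤ n → m ∈ MSet r I n := by
  obtain ⟨f, hfI, hf0, hlm⟩ := hm
  obtain ⟨N, hN1, hN⟩ := exists_Sn_bound f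
  exact ⟨N, hN1, fun n hn => ⟨f, hfI, hN n hn, hf0, hlm⟩⟩

/-- Membership in the intersection ideal. -/
lemma mem_interIdeal_iff {I : Ideal (MvPolynomial ℕ k)} {n : ℕ} {x : ↥(Sn k n)} :
    x ∈ interIdeal I n ↔ (x : MvPolynomial ℕ k) ∈ I := by
  rw [interIdeal, Ideal.mem_comap]; rfl


/-- If `s` is the leading monomial of an element of `I ∩ Sn k n`, and `G` is a (reduced)
Gröbner basis of `I ∩ Sn k n`, then some leading monomial of `G` divides `s`. -/
lemma divisor_in_Gn (hr : IsMonomialOrder r) {I : Ideal (MvPolynomial ℕ k)} {n : ℕ}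
    {G : Set (MvPolynomial ℕ k)} (hGB : IsReducedGBIn r n G (interIdeal I n))
    {s : ℕ →₀ ℕ} (hs : s ∈ MSet r I n) :
    ∃ g ∈ G, g ≠ 0 ∧ ∃ l, IsLM r g l ∧ l ≤ s := by
  obtain ⟨f, hfI, hfSn, hf0, hlm⟩ := hs
  have hm1 : (monomial s (1:k)) ∈ Sn k n := mem_Sn_support hfSn hlm.1
  have hc0 : f.coeff s ≠ 0 := MvPolynomial.mem_support_iff.1 hlm.1
  have hmc : (monomial s (f.coeff s)) ∈ Sn k n := monomial_mem_Sn hm1 _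
  have htmem : (⟨monomial s (f.coeff s), hmc⟩ : ↥(Sn k n)) ∈ initialIdealIn r n (interIdeal I n) := by
    apply Ideal.subset_span
    refine ⟨⟨f, hfSn⟩, mem_interIdeal_iff.2 hfI, ?_, ⟨s, hlm, rfl⟩⟩
    intro h0
    exact hf0 (congrArg Subtype.val h0)
  have hz : (⟨monomial s 1, hm1⟩ : ↥(Sn k n)) ∈ initialIdealIn r n (interIdeal I n) := by
    have he : (⟨monomial s 1, hm1⟩ : ↥(Sn k n)) =
        ⟨C (f.coeff s)⁻¹, by simpa using (Sn k n).algebraMap_mem ((f.coeff s)⁻¹)⟩ *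
          ⟨monomial s (f.coeff s), hmc⟩ := by
      apply Subtype.ext
      show (monomial s (1:k)) = C (f.coeff s)⁻¹ * monomial s (f.coeff s)
      rw [MvPolynomial.C_mul_monomial, inv_mul_cancel₀ hc0]
    rw [he]
    exact Ideal.mul_mem_left _ _ htmem
  rw [← hGB.1.2] at hz
  have hz2 : (monomial s (1:k)) ∈ Ideal.span
      {t | ∃ m, m ∈ {m | ∃ g ∈ G, g ≠ 0 ∧ IsLM r g m} ∧ t = (monomial m 1 : MvPolynomial ℕ k)} := by
    have h1 := Ideal.mem_map_of_mem (Sn k n).subtype hz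
    rw [Ideal.map_span] at h1
    refine Ideal.span_mono ?_ h1
    rintro x ⟨y, ⟨m, hm, hy⟩, rfl⟩
    exact ⟨m, hm, hy⟩
  have hsupp : s ∈ (monomial s (1:k)).support := by
    classical
    rw [MvPolynomial.support_monomial, if_neg (one_ne_zero (α := k))]
    exact Finset.mem_singleton_self s
  obtain ⟨l, ⟨g, hgG, hg0, hglm⟩, hls⟩ := mem_span_monomials hz2 s hsupp
  exact ⟨g, hgG, hg0, l, hglm, hls⟩

/-- In a reduced Gröbner basis, no leading monomial of a member divides a non-leading
term of any member. -/
lemma tail_not_reducible (hr : IsMonomialOrder r) {I : Ideal (MvPolynomial ℕ k)} {n : ℕ}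
    {G : Set (MvPolynomial ℕ k)} (hGB : IsReducedGBIn r n G (interIdeal I n))
    {g : MvPolynomial ℕ k} (hgG : g ∈ G) {d} (hd : IsLM r g d)
    {m'} (hm' : m' ∈ g.support) (hne : m' ≠ d)
    {u} (huG : u ∈ G) {l} (hl : IsLM r u l) : ¬ l ≤ m' := by
  intro hle
  by_cases hug : u = g
  · subst hug
    have hld : l = d := isLM_unique hr hl hd
    subst hld
    exact mo_asymm hr (hd.2 m' hm' hne) (mo_lt_of_le hr hle (fun h => hne h.symm))
  · exact hGB.2.2 u huG g hgG hug l hl m' hm' hle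


/-- Normal form: every polynomial has a remainder modulo `I` none of whose terms is
divisible by a leading monomial of `I`, and whose terms are bounded by those of `f`. -/
lemma exists_normalForm (hr : IsMonomialOrder r) (I : Ideal (MvPolynomial ℕ k))
    (f : MvPolynomial ℕ k) :
    ∃ v : MvPolynomial ℕ k, f - v ∈ I ∧
      (∀ s ∈ v.support, ¬ ∃ m ∈ MAll r I, m ≤ s) ∧
      (∀ s ∈ v.support, ∃ t ∈ f.support, s = t ∨ r s t) := by
  classical
  haveI := hr.1
  have wf : WellFounded r := IsWellFounded.wf
  set Red : (ℕ →₀ ℕ) → Prop := fun s => ∃ m ∈ MAll r I, m ≤ s with hRed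
  suffices H : ∀ t : ℕ →₀ ℕ, ∀ f : MvPolynomial ℕ k,
      (∀ s ∈ f.support, Red s → s = t ∨ r s t) →
      ∃ v, f - v ∈ I ∧ (∀ s ∈ v.support, ¬ Red s) ∧
        (∀ s ∈ v.support, ∃ t' ∈ f.support, s = t' ∨ r s t') by
    by_cases hred : ∃ s ∈ f.support, Red s
    · obtain ⟨s₀, hs₀, hR₀⟩ := hred
      set S := f.support.filter Red with hS
      have hSne : S.Nonempty := ⟨s₀, Finset.mem_filter.2 ⟨hs₀, hR₀⟩⟩
      obtain ⟨t, htS, hmax⟩ := exists_rmax hr S hSne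
      refine H t f ?_
      intro s hs hR
      by_cases hst : s = t
      · exact Or.inl hst
      · exact Or.inr (hmax s (Finset.mem_filter.2 ⟨hs, hR⟩) hst)
    · exact ⟨f, by rw [sub_self]; exact I.zero_mem,
        fun s hs hR => hred ⟨s, hs, hR⟩, fun s hs => ⟨s, hs, Or.inl rfl⟩⟩
  refine fun t => wf.induction (C := fun t => ∀ f : MvPolynomial ℕ k,
      (∀ s ∈ f.support, Red s → s = t ∨ r s t) →
      ∃ v, f - v ∈ I ∧ (∀ s ∈ v.support, ¬ Red s) ∧
        (∀ s ∈ v.support, ∃ t' ∈ f.support, s = t' ∨ r s t')) t ?_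
  intro t IH f hf
  by_cases hred : ∃ s ∈ f.support, Red s
  swap
  · exact ⟨f, by rw [sub_self]; exact I.zero_mem,
      fun s hs hR => hred ⟨s, hs, hR⟩, fun s hs => ⟨s, hs, Or.inl rfl⟩⟩
  obtain ⟨s₀, hs₀, hR₀⟩ := hred
  set S := f.support.filter Red with hS
  have hSne : S.Nonempty := ⟨s₀, Finset.mem_filter.2 ⟨hs₀, hR₀⟩⟩
  obtain ⟨t', ht'S, hmax⟩ := exists_rmax hr S hSne
  have ht'f : t' ∈ f.support := (Finset.mem_filter.1 ht'S).1
  have ht'R : Red t' := (Finset.mem_filter.1 ht'S).2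
  obtain ⟨m, ⟨h0, hh0I, hh00, hh0lm⟩, hmle⟩ := ht'R
  have hlc : h0.coeff m ≠ 0 := MvPolynomial.mem_support_iff.1 hh0lm.1
  set c : k := f.coeff t' * (h0.coeff m)⁻¹ with hc
  have hcne : c ≠ 0 := mul_ne_zero (MvPolynomial.mem_support_iff.1 ht'f) (inv_ne_zero hlc)
  set q : MvPolynomial ℕ k := monomial (t' - m) c with hq
  set f₁ := f - q * h0 with hf₁
  have hsub : f - f₁ ∈ I := by
    rw [hf₁, sub_sub_cancel]
    exact I.mul_mem_left q hh0I
  have hqh_supp : ∀ s ∈ (q * h0).support, s = t' ∨ r s t' := by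
    intro s hs
    obtain ⟨u, hu, v, hv, huv⟩ := Finset.mem_add.1 (MvPolynomial.support_mul q h0 hs)
    subst huv
    rw [hq, MvPolynomial.support_monomial, if_neg hcne, Finset.mem_singleton] at hu
    subst hu
    by_cases hvm : v = m
    · subst hvm
      exact Or.inl (tsub_add_cancel_of_le hmle)
    · right
      have h1 : r v m := hh0lm.2 v hv hvm
      have h2 := hr.2 v m (t' - m) h1
      rwa [tsub_add_cancel_of_le hmle] at h2
  have hcoefft' : f₁.coeff t' = 0 := by
    have h2 : (q * h0).coeff ((t' - m) + m) = c * h0.coeff m :=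
      MvPolynomial.coeff_monomial_mul _ _ _ _
    rw [tsub_add_cancel_of_le hmle] at h2
    rw [hf₁, MvPolynomial.coeff_sub, h2, hc, mul_assoc, inv_mul_cancel₀ hlc, mul_one, sub_self]
  have hf₁supp : ∀ s ∈ f₁.support, (s ∈ f.support ∨ s ∈ (q * h0).support) ∧ s ≠ t' := by
    intro s hs
    refine ⟨Finset.mem_union.1 (MvPolynomial.support_sub ℕ f (q * h0) hs), ?_⟩
    rintro rfl
    exact MvPolynomial.mem_support_iff.1 hs hcoefft'
  have hE : ∀ s ∈ f₁.support, Red s → r s t' := by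
    intro s hs hR
    obtain ⟨hcase, hsne⟩ := hf₁supp s hs
    rcases hcase with h | h
    · exact hmax s (Finset.mem_filter.2 ⟨h, hR⟩) hsne
    · rcases hqh_supp s h with h' | h'
      · exact absurd h' hsne
      · exact h'
  have hbound : ∀ s ∈ f₁.support, ∃ u ∈ f.support, s = u ∨ r s u := by
    intro s hs
    rcases (hf₁supp s hs).1 with h | h
    · exact ⟨s, h, Or.inl rfl⟩
    · rcases hqh_supp s h with h' | h'
      · exact ⟨t', ht'f, Or.inl h'⟩
      · exact ⟨t', ht'f, Or.inr h'⟩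
  have hPf₁ : ∃ v, f₁ - v ∈ I ∧ (∀ s ∈ v.support, ¬ Red s) ∧
      (∀ s ∈ v.support, ∃ u ∈ f₁.support, s = u ∨ r s u) := by
    by_cases hredf₁ : ∃ s ∈ f₁.support, Red s
    · obtain ⟨s₀', hs₀', hR₀'⟩ := hredf₁
      set S₁ := f₁.support.filter Red with hS₁
      have hS₁ne : S₁.Nonempty := ⟨s₀', Finset.mem_filter.2 ⟨hs₀', hR₀'⟩⟩
      obtain ⟨s₁, hs₁S, hmax₁⟩ := exists_rmax hr S₁ hS₁ne
      have hs₁f : s₁ ∈ f₁.support := (Finset.mem_filter.1 hs₁S).1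
      have hs₁R : Red s₁ := (Finset.mem_filter.1 hs₁S).2
      have hrs₁t : r s₁ t := by
        have h1 : r s₁ t' := hE s₁ hs₁f hs₁R
        rcases hf t' ht'f ⟨m, ⟨h0, hh0I, hh00, hh0lm⟩, hmle⟩ with h2 | h2
        · rwa [h2] at h1
        · exact mo_trans hr h1 h2
      refine IH s₁ hrs₁t f₁ ?_
      intro s hs hR
      by_cases hss : s = s₁
      · exact Or.inl hss
      · exact Or.inr (hmax₁ s (Finset.mem_filter.2 ⟨hs, hR⟩) hss)
    · exact ⟨f₁, by rw [sub_self]; exact I.zero_mem,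
        fun s hs hR => hredf₁ ⟨s, hs, hR⟩, fun s hs => ⟨s, hs, Or.inl rfl⟩⟩
  obtain ⟨v, hv1, hv2, hv3⟩ := hPf₁
  refine ⟨v, ?_, hv2, ?_⟩
  · have he : f - v = (f - f₁) + (f₁ - v) := by ring
    rw [he]
    exact I.add_mem hsub hv1
  · intro s hs
    obtain ⟨u, hu, hcase⟩ := hv3 s hs
    obtain ⟨w, hw, hcase2⟩ := hbound u hu
    refine ⟨w, hw, ?_⟩
    rcases hcase with rfl | h
    · exact hcase2
    · rcases hcase2 with rfl | h2
      · exact Or.inr h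
      · exact Or.inr (mo_trans hr h h2)


/-- Main construction: every leading monomial of `I` is divisible by the leading monomial
of some element of the limit set `Ḡ`. -/
lemma exists_gbar_elem (hr : IsMonomialOrder r) {I : Ideal (MvPolynomial ℕ k)}
    {Gn : ℕ → Set (MvPolynomial ℕ k)}
    (hGn : ∀ n : ℕ, 1 ≤ n → IsReducedGBIn r n (Gn n) (interIdeal I n))
    {mstar : ℕ →₀ ℕ} (hms : mstar ∈ MAll r I) :
    ∃ g ∈ (⋃ m : ℕ, ⋃ (_ : 1 ≤ m), ⋂ n : ℕ, ⋂ (_ : m ≤ n), Gn n), g ≠ 0 ∧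
      ∃ d, IsLM r g d ∧ d ≤ mstar := by
  classical
  have wfd : WellFounded ((· < ·) : (ℕ →₀ ℕ) → (ℕ →₀ ℕ) → Prop) := wellFounded_lt
  obtain ⟨d, ⟨hdM, hdle⟩, hmin⟩ :=
    wfd.has_min {s | s ∈ MAll r I ∧ s ≤ mstar} ⟨mstar, hms, le_refl _⟩
  obtain ⟨n₁, hn₁1, hn₁⟩ := MAll_eq_union hdM
  obtain ⟨v, hvI, hvirr, hvbd⟩ := exists_normalForm hr I (monomial d 1)
  set g := monomial d (1:k) - v with hg
  have hdv : d ∉ v.support := fun hd => hvirr d hd ⟨d, hdM, le_refl d⟩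
  have hcg : g.coeff d = 1 := by
    rw [hg, MvPolynomial.coeff_sub, MvPolynomial.coeff_monomial, if_pos rfl,
      MvPolynomial.notMem_support_iff.1 hdv, sub_zero]
  have hg0 : g ≠ 0 := by
    intro h
    rw [h] at hcg
    simp at hcg
  have hgI : g ∈ I := hvI
  have hgsupp : ∀ s ∈ g.support, s = d ∨ r s d := by
    intro s hs
    rw [hg] at hs
    rcases Finset.mem_union.1 (MvPolynomial.support_sub ℕ (monomial d 1) v hs) with h | h
    · left
      rwa [MvPolynomial.support_monomial, if_neg (one_ne_zero (α := k)),
        Finset.mem_singleton] at h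
    · right
      obtain ⟨u, hu, hcase⟩ := hvbd s h
      rw [MvPolynomial.support_monomial, if_neg (one_ne_zero (α := k)),
        Finset.mem_singleton] at hu
      subst hu
      rcases hcase with rfl | h'
      · exact absurd h hdv
      · exact h'
  have hglm : IsLM r g d := by
    refine ⟨MvPolynomial.mem_support_iff.2 (by rw [hcg]; exact one_ne_zero), ?_⟩
    intro m' hm' hne
    rcases hgsupp m' hm' with h | h
    · exact absurd h hne
    · exact h
  obtain ⟨n₂, hn₂1, hn₂⟩ := exists_Sn_bound g
  set N := max n₁ n₂ with hN
  have hGBar : ∀ n, N ≤ n → g ∈ Gn n := by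
    intro n hn
    have hn1 : 1 ≤ n := le_trans hn₁1 (le_trans (le_max_left _ _) hn)
    have hGB := hGn n hn1
    have hdn : d ∈ MSet r I n := hn₁ n (le_trans (le_max_left _ _) hn)
    obtain ⟨gn, hgnG, hgn0, l, hgnlm, hld⟩ := divisor_in_Gn hr hGB hdn
    obtain ⟨hgnSn, hgnJ⟩ := hGB.1.1 gn hgnG
    have hgnI : gn ∈ I := mem_interIdeal_iff.1 hgnJ
    have hlM : l ∈ MAll r I := ⟨gn, hgnI, hgn0, hgnlm⟩
    have hld2 : l = d := by
      by_contra hne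
      exact hmin l ⟨hlM, le_trans hld hdle⟩ (lt_of_le_of_ne hld hne)
    subst hld2
    obtain ⟨md, hmd, hmd1⟩ := hGB.2.1 gn hgnG
    have hmdl : md = l := isLM_unique hr hmd hgnlm
    subst hmdl
    set h := g - gn with hh
    have hhI : h ∈ I := I.sub_mem hgI hgnI
    have hhSn : h ∈ Sn k n := sub_mem (hn₂ n (le_trans (le_max_right _ _) hn)) hgnSn
    by_cases hh0 : h = 0
    · have : g = gn := by rwa [hh, sub_eq_zero] at hh0
      rwa [this]
    · exfalso
      obtain ⟨tt, htlm⟩ := exists_isLM hr hh0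
      have htM : tt ∈ MSet r I n := ⟨h, hhI, hhSn, hh0, htlm⟩
      have htd : tt ≠ md := by
        intro hteq
        subst hteq
        have hz : h.coeff tt = 0 := by
          rw [hh, MvPolynomial.coeff_sub, hcg, hmd1, sub_self]
        exact MvPolynomial.mem_support_iff.1 htlm.1 hz
      have htsupp := htlm.1
      rw [hh] at htsupp
      rcases Finset.mem_union.1 (MvPolynomial.support_sub ℕ g gn htsupp) with hcase | hcase
      · have htv : tt ∈ v.support := by
          rw [hg] at hcase
          rcases Finset.mem_union.1
            (MvPolynomial.support_sub ℕ (monomial md 1) v hcase) with h1 | h1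
          · rw [MvPolynomial.support_monomial, if_neg (one_ne_zero (α := k)),
              Finset.mem_singleton] at h1
            exact absurd h1 htd
          · exact h1
        exact hvirr tt htv ⟨tt, MSet_subset_MAll htM, le_refl tt⟩
      · obtain ⟨u, huG, hu0, l', hl'lm, hl't⟩ := divisor_in_Gn hr hGB htM
        exact tail_not_reducible hr hGB hgnG hgnlm hcase htd huG hl'lm hl't
  refine ⟨g, ?_, hg0, d, hglm, hdle⟩
  simp only [Set.mem_iUnion, Set.mem_iInter]
  exact ⟨N, le_trans hn₁1 (le_max_left _ _), fun n hn => hGBar n hn⟩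

end AuxLemmas

/-- Theorem 1.12: if `Gₙ` is the reduced Gröbner base for `I ∩ S⟨n⟩` inside `S⟨n⟩` for
each `n ≥ 1`, then `Ḡ = ⋃_{m ≥ 1} ⋂_{n ≥ m} Gₙ` is the reduced Gröbner base for `I`. -/
theorem reducedGB_union_inter {k : Type*} [Field k]
    (r : (ℕ →₀ ℕ) → (ℕ →₀ ℕ) → Prop) (hr : IsMonomialOrder r)
    (I : Ideal (MvPolynomial ℕ k)) (hI : I ≠ ⊥)
    (Gn : ℕ → Set (MvPolynomial ℕ k))
    (hGn : ∀ n : ℕ, 1 ≤ n → IsReducedGBIn r n (Gn n) (interIdeal I n)) :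
    IsReducedGB r (⋃ m : ℕ, ⋃ (_ : 1 ≤ m), ⋂ n : ℕ, ⋂ (_ : m ≤ n), Gn n) I := by
  classical
  set GBar := (⋃ m : ℕ, ⋃ (_ : 1 ≤ m), ⋂ n : ℕ, ⋂ (_ : m ≤ n), Gn n) with hGBarDef
  have hmem : ∀ g ∈ GBar, ∃ m, 1 ≤ m ∧ ∀ n, m ≤ n → g ∈ Gn n := by
    intro g hgm
    rw [hGBarDef] at hgm
    simpa [Set.mem_iUnion, Set.mem_iInter] using hgm
  have hsubI : ∀ g ∈ GBar, g ∈ I := by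
    intro g hgm
    obtain ⟨m, hm1, hm⟩ := hmem g hgm
    obtain ⟨hgSn, hgJ⟩ := (hGn m hm1).1.1 g (hm m le_rfl)
    exact mem_interIdeal_iff.1 hgJ
  have hspan : Ideal.span (lmMonomials r GBar) = initialIdeal r I := by
    apply le_antisymm
    · rw [Ideal.span_le]
      rintro tpoly ⟨m, ⟨g, hgG, hg0, hlm⟩, rfl⟩
      have hgI := hsubI g hgG
      have hc : g.coeff m ≠ 0 := MvPolynomial.mem_support_iff.1 hlm.1
      have hgen : (monomial m (g.coeff m) : MvPolynomial ℕ k) ∈ initialIdeal r I :=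
        Ideal.subset_span ⟨g, hgI, hg0, m, hlm, rfl⟩
      have he : (monomial m 1 : MvPolynomial ℕ k)
          = C (g.coeff m)⁻¹ * monomial m (g.coeff m) := by
        rw [MvPolynomial.C_mul_monomial, inv_mul_cancel₀ hc]
      rw [SetLike.mem_coe, he]
      exact Ideal.mul_mem_left _ _ hgen
    · rw [initialIdeal, Ideal.span_le]
      rintro tpoly ⟨f, hfI, hf0, mstar, hlmf, rfl⟩
      have hms : mstar ∈ MAll r I := ⟨f, hfI, hf0, hlmf⟩
      obtain ⟨g, hgG, hg0, d, hglm, hdle⟩ := exists_gbar_elem hr hGn hms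
      have hd1 : (monomial d 1 : MvPolynomial ℕ k) ∈ Ideal.span (lmMonomials r GBar) :=
        Ideal.subset_span ⟨d, ⟨g, hgG, hg0, hglm⟩, rfl⟩
      have heq : (monomial mstar (f.coeff mstar) : MvPolynomial ℕ k)
          = C (f.coeff mstar) * monomial (mstar - d) 1 * monomial d 1 := by
        rw [mul_assoc, MvPolynomial.monomial_mul, one_mul, MvPolynomial.C_mul_monomial,
          mul_one, tsub_add_cancel_of_le hdle]
      rw [SetLike.mem_coe, heq]
      exact Ideal.mul_mem_left _ _ hd1
  refine ⟨⟨fun g hgG => hsubI g hgG, hspan⟩, ?_, ?_⟩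
  · intro g hgG
    obtain ⟨m, hm1, hm⟩ := hmem g hgG
    exact (hGn m hm1).2.1 g (hm m le_rfl)
  · intro g hgG h hhG hne mm hmm m' hm'
    obtain ⟨a, ha1, ha⟩ := hmem g hgG
    obtain ⟨b, hb1, hb⟩ := hmem h hhG
    have hab : 1 ≤ max a b := le_trans ha1 (le_max_left _ _)
    exact (hGn (max a b) hab).2.2 g (ha _ (le_max_left a b)) h (hb _ (le_max_right a b))
      hne mm hmm m' hm'


end
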